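/- Let p ≥ 5 be a prime and let m ≥ 2 be an even integer. Then there is no integer j with 0 ≤ j ≤ pm − 2 satisfying j² − (pm−1)·j + p + 1 − pm = 0. -/
import Mathlib

/-- For `p ≥ 5` prime and `m ≥ 2` even, the quadratic
`j² - (pm-1)·j + p + 1 - pm` has no integer root in `[0, pm-2]`. -/
theorem no_root_k1_case_a (p m : ℤ) (hp : Prime p) (hp5 : 5 ≤ p)
    (hm : 2 ≤ m) (hmeven : Even m) :
    ¬ ∃ j : ℤ, 0 ≤ j ∧ j ≤ p * m - 2 ∧
      j ^ 2 - (p * m - 1) * j + p + 1 - p * m = 0 := by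
  rintro ⟨j, hj0, hj1, heq⟩
  nlinarith [mul_nonneg hj0 (by linarith : (0:ℤ) ≤ p * m - 2 - j), mul_pos (by linarith : (0:ℤ) < p) (by linarith : (0:ℤ) < m - 1)]
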